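/- arXiv:1904.07368 — 5 statements merged into one kernel-verified Lean document; each statement's English description precedes it below -/
import Mathlib

section
/- Let f : ℝ → ℝ be a probability density that is unimodal with center μ (i.e., f is non-decreasing on (-∞, μ], non-increasing on [μ, ∞), and f(μ+c) = f(μ-c) for all c). Let g(x,u) = exp(-λ((x-u)² + h²)^(r/2)) with λ > 0, h ≥ 0, r ≥ 1. Then for every u ∈ ℝ, ∫ g(x,μ) f(x) dx ≥ ∫ g(x,u) f(x) dx; i.e., u = μ maximizes u ↦ ∫ g(x,u) f(x) dx. -/
open Real MeasureTheory

/-- For a unimodal density `f` with center `μ`, the center `μ`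
maximizes `u ↦ ∫ g(x,u) f(x) dx` where `g(x,u) = exp(-λ((x-u)²+h²)^(r/2))`. -/
theorem stmt_0 (f : ℝ → ℝ) (μ lam h r : ℝ)
    (hlam : 0 < lam) (hh : 0 ≤ h) (hr : 1 ≤ r)
    (hf0 : ∀ x, 0 ≤ f x) (hf1 : ∫ x, f x = 1)
    (hmono : MonotoneOn f (Set.Iic μ)) (hanti : AntitoneOn f (Set.Ici μ))
    (hsym : ∀ c : ℝ, f (μ + c) = f (μ - c)) :
    ∀ u : ℝ,
      ∫ x, Real.exp (-lam * (((x - u) ^ 2 + h ^ 2) ^ (r / 2))) * f x ≤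
        ∫ x, Real.exp (-lam * (((x - μ) ^ 2 + h ^ 2) ^ (r / 2))) * f x := by
  intro u
  -- the kernel as a function of the (signed) distance
  set g : ℝ → ℝ := fun s => Real.exp (-lam * ((s ^ 2 + h ^ 2) ^ (r / 2))) with hgdef
  have hg0 : ∀ s, 0 ≤ g s := fun s => (Real.exp_pos _).le
  have hg1 : ∀ s, g s ≤ 1 := by
    intro s
    have h1 : (0:ℝ) ≤ (s ^ 2 + h ^ 2) ^ (r / 2) :=
      Real.rpow_nonneg (by positivity) _
    have : -lam * ((s ^ 2 + h ^ 2) ^ (r / 2)) ≤ 0 := by nlinarith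
    exact Real.exp_le_one_iff.mpr this
  have hgcont : Continuous g := by
    apply Real.continuous_exp.comp
    apply Continuous.mul continuous_const
    apply Continuous.rpow_const (by continuity)
    intro s; right; positivity
  -- g is "decreasing in |s|"
  have hgmono : ∀ a b : ℝ, |a| ≤ |b| → g b ≤ g a := by
    intro a b hab
    have h2 : a ^ 2 ≤ b ^ 2 := by
      have := abs_nonneg a
      nlinarith [sq_abs a, sq_abs b]
    have h3 : (a ^ 2 + h ^ 2) ^ (r / 2) ≤ (b ^ 2 + h ^ 2) ^ (r / 2) :=
      Real.rpow_le_rpow (by positivity) (by linarith) (by linarith)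
    exact Real.exp_le_exp.mpr (by nlinarith)
  -- g is even
  have hgeven : ∀ s : ℝ, g (-s) = g s := by
    intro s; simp [hgdef, neg_pow]
  -- f is integrable
  have hfint : Integrable f := by
    by_contra hc
    rw [integral_undef hc] at hf1
    norm_num at hf1
  -- f decreases in distance from μ
  have hfsymm : ∀ x : ℝ, f (2 * μ - x) = f x := by
    intro x
    have := hsym (x - μ)
    have h1 : μ + (x - μ) = x := by ring
    have h2 : μ - (x - μ) = 2 * μ - x := by ring
    rw [h1, h2] at this
    exact this.symm
  have hfmono : ∀ a b : ℝ, |a - μ| ≤ |b - μ| → f b ≤ f a := by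
    intro a b hab
    have hfa : f a = f (μ + |a - μ|) := by
      rcases le_total μ a with hle | hle
      · rw [abs_of_nonneg (by linarith)]; ring_nf
      · rw [abs_of_nonpos (by linarith), hsym]; ring_nf
    have hfb : f b = f (μ + |b - μ|) := by
      rcases le_total μ b with hle | hle
      · rw [abs_of_nonneg (by linarith)]; ring_nf
      · rw [abs_of_nonpos (by linarith), hsym]; ring_nf
    rw [hfa, hfb]
    exact hanti (by simp [abs_nonneg]) (by simp [abs_nonneg]) (by linarith)
  -- integrability of all the products
  have hbdd : ∀ v : ℝ, Integrable (fun x => g (x - v) * f x) := by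
    intro v
    refine hfint.bdd_mul (c := 1) ?_ (Filter.Eventually.of_forall fun x => ?_)
    · exact (hgcont.comp (by continuity)).aestronglyMeasurable
    · rw [Real.norm_eq_abs, abs_of_nonneg (hg0 _)]; exact hg1 _
  have hφint : Integrable (fun x => (g (x - μ) - g (x - u)) * f x) := by
    exact ((hbdd μ).sub (hbdd u)).congr
      (Filter.Eventually.of_forall fun x => by simp only [Pi.sub_apply]; ring)
  -- the reflected integrand
  have hφrint : Integrable (fun x => (g (x - u) - g (x - μ)) * f (μ + u - x)) := by
    have h1 : Integrable (fun x => f (μ + u - x)) := hfint.comp_sub_left (μ + u)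
    refine h1.bdd_mul (c := 2) ?_ (Filter.Eventually.of_forall fun x => ?_)
    · exact ((hgcont.comp (by continuity)).sub (hgcont.comp (by continuity))).aestronglyMeasurable
    · rw [Real.norm_eq_abs]
      have := hg0 (x - μ); have := hg1 (x - μ); have := hg0 (x - u); have := hg1 (x - u)
      rw [abs_le]; constructor <;> linarith
  -- reflection invariance of the difference integral
  have hrefl : (∫ x, (g (x - μ) - g (x - u)) * f x)
      = ∫ x, (g (x - u) - g (x - μ)) * f (μ + u - x) := by
    have := integral_sub_left_eq_self
      (fun x => (g (x - μ) - g (x - u)) * f x) (volume : Measure ℝ) (μ + u)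
    rw [← this]
    congr 1
    funext x
    have h1 : μ + u - x - μ = -(x - u) := by ring
    have h2 : μ + u - x - u = -(x - μ) := by ring
    rw [h1, h2, hgeven, hgeven]
  -- pointwise nonnegativity of the symmetrized integrand
  have hptwise : ∀ x : ℝ,
      0 ≤ (g (x - μ) - g (x - u)) * f x + (g (x - u) - g (x - μ)) * f (μ + u - x) := by
    intro x
    have hkey : 0 ≤ (g (x - μ) - g (x - u)) * (f x - f (μ + u - x)) := by
      have habs : |μ + u - x - μ| = |x - u| := by
        rw [show μ + u - x - μ = -(x - u) by ring, abs_neg]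
      rcases le_total |x - μ| |x - u| with hc | hc
      · have h1 : g (x - u) ≤ g (x - μ) := hgmono _ _ hc
        have h2 : f (μ + u - x) ≤ f x := by
          apply hfmono
          rw [habs]; exact hc
        nlinarith
      · have h1 : g (x - μ) ≤ g (x - u) := hgmono _ _ hc
        have h2 : f x ≤ f (μ + u - x) := by
          apply hfmono
          rw [habs]; exact hc
        nlinarith
    nlinarith [hkey, sq_nonneg (f x - f (μ + u - x))]
  -- conclude
  have hD : 0 ≤ ∫ x, (g (x - μ) - g (x - u)) * f x := by
    have h2 : (2:ℝ) * ∫ x, (g (x - μ) - g (x - u)) * f x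
        = ∫ x, ((g (x - μ) - g (x - u)) * f x + (g (x - u) - g (x - μ)) * f (μ + u - x)) := by
      rw [integral_add hφint hφrint, ← hrefl]; ring
    have h3 : 0 ≤ ∫ x, ((g (x - μ) - g (x - u)) * f x
        + (g (x - u) - g (x - μ)) * f (μ + u - x)) :=
      integral_nonneg hptwise
    linarith
  have hsub : (∫ x, g (x - μ) * f x) - ∫ x, g (x - u) * f x
      = ∫ x, (g (x - μ) - g (x - u)) * f x := by
    rw [← integral_sub (hbdd μ) (hbdd u)]
    congr 1; funext x; ring
  have : (∫ x, g (x - u) * f x) ≤ ∫ x, g (x - μ) * f x := by linarith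
  simpa [hgdef] using this
end

section
/- Let f be the uniform density on [0,M] ⊂ ℝ, h = 0, λ > 0, r ≥ 1. There exists a constant c > 0 (depending on M, λ, r but not on n) such that for every n ≥ 1 and every deployment u₁,…,uₙ ∈ ℝ, ∫₀^M ∏_{i=1}^n (1 - exp(-λ|x-uᵢ|^r)) dx/M ≥ cⁿ. -/
open Real MeasureTheory

noncomputable def uavPhi (lam r u x : ℝ) : ℝ := -Real.log (1 - Real.exp (-lam * |x - u| ^ r))

lemma uav_abs_rpow (x : ℝ) :
    |x| ^ (-(1/2) : ℝ) = x ^ (-(1/2) : ℝ) + (-x) ^ (-(1/2) : ℝ) := by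
  have hcos : Real.cos (-(1/2) * Real.pi) = 0 := by
    rw [show (-(1/2) : ℝ) * Real.pi = -(Real.pi/2) by ring, Real.cos_neg, Real.cos_pi_div_two]
  rcases lt_trichotomy x 0 with h | h | h
  · rw [abs_of_neg h, Real.rpow_def_of_neg h, hcos, mul_zero, zero_add]
  · subst h
    simp [Real.zero_rpow (by norm_num : (-(1/2) : ℝ) ≠ 0)]
  · rw [abs_of_pos h, Real.rpow_def_of_neg (neg_lt_zero.mpr h), hcos, mul_zero, add_zero]

lemma uav_intervalIntegrable (u a b : ℝ) :
    IntervalIntegrable (fun x => |x - u| ^ (-(1/2) : ℝ)) volume a b := by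
  have h1 : IntervalIntegrable (fun x : ℝ => x ^ (-(1/2) : ℝ)) volume (a - u) (b - u) :=
    intervalIntegral.intervalIntegrable_rpow' (by norm_num)
  have h2 : IntervalIntegrable (fun x : ℝ => (x - u) ^ (-(1/2) : ℝ)) volume a b := by
    simpa using h1.comp_sub_right u
  have h1' : IntervalIntegrable (fun x : ℝ => x ^ (-(1/2) : ℝ)) volume (u - a) (u - b) :=
    intervalIntegral.intervalIntegrable_rpow' (by norm_num)
  have h3 : IntervalIntegrable (fun x : ℝ => (u - x) ^ (-(1/2) : ℝ)) volume a b := by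
    simpa using h1'.comp_sub_left u
  have heq : (fun x : ℝ => |x - u| ^ (-(1/2) : ℝ)) =
      fun x => (x - u) ^ (-(1/2) : ℝ) + (u - x) ^ (-(1/2) : ℝ) := by
    funext x
    rw [uav_abs_rpow (x - u), neg_sub]
  rw [heq]
  exact h2.add h3

lemma uav_integrableOn (u a b : ℝ) (hab : a ≤ b) :
    IntegrableOn (fun x => |x - u| ^ (-(1/2) : ℝ)) (Set.Icc a b) volume := by
  rw [integrableOn_Icc_iff_integrableOn_Ioc]
  exact (intervalIntegrable_iff_integrableOn_Ioc_of_le hab).mp (uav_intervalIntegrable u a b)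

lemma uav_measurable (lam r u : ℝ) : Measurable (uavPhi lam r u) := by
  have m1 : Measurable fun x : ℝ => |x - u| ^ r :=
    ((measurable_id.sub measurable_const).abs).pow measurable_const
  exact (Real.measurable_log.comp
    (measurable_const.sub (Real.measurable_exp.comp (m1.const_mul (-lam))))).neg

lemma uav_phi_nonneg {lam : ℝ} (hlam : 0 < lam) (r u x : ℝ) : 0 ≤ uavPhi lam r u x := by
  unfold uavPhi
  rw [neg_nonneg]
  have hexp : Real.exp (-lam * |x - u| ^ r) ≤ 1 := by
    rw [Real.exp_le_one_iff, neg_mul, neg_nonpos]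
    exact mul_nonneg hlam.le (Real.rpow_nonneg (abs_nonneg _) r)
  have hpos : (0:ℝ) < Real.exp (-lam * |x - u| ^ r) := Real.exp_pos _
  exact Real.log_nonpos (by linarith) (by linarith)

lemma uav_factor_pos {lam r u x : ℝ} (hlam : 0 < lam) (hx : x ≠ u) :
    0 < 1 - Real.exp (-lam * |x - u| ^ r) := by
  have ht : 0 < |x - u| := abs_pos.mpr (sub_ne_zero.mpr hx)
  have hs : 0 < lam * |x - u| ^ r := mul_pos hlam (Real.rpow_pos_of_pos ht r)
  have : Real.exp (-lam * |x - u| ^ r) < 1 := by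
    rw [Real.exp_lt_one_iff, neg_mul]; linarith
  linarith

lemma uav_factor_eq {lam r u x : ℝ} (hlam : 0 < lam) (hx : x ≠ u) :
    1 - Real.exp (-lam * |x - u| ^ r) = Real.exp (-(uavPhi lam r u x)) := by
  unfold uavPhi
  rw [neg_neg, Real.exp_log (uav_factor_pos hlam hx)]

lemma uav_key_exp {s : ℝ} (hs : 0 < s) : Real.exp (-1) * min s 1 ≤ 1 - Real.exp (-s) := by
  rcases le_total s 1 with h | h
  · rw [min_eq_left h]
    have h1 : s + 1 ≤ Real.exp s := Real.add_one_le_exp s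
    have h2 : Real.exp (-1) ≤ Real.exp (-s) := Real.exp_le_exp.mpr (by linarith)
    have h3 : (0:ℝ) < Real.exp (-s) := Real.exp_pos _
    have h4 : Real.exp (-s) * Real.exp s = 1 := by rw [← Real.exp_add]; norm_num
    nlinarith [mul_le_mul_of_nonneg_right h2 hs.le, mul_le_mul_of_nonneg_left h1 h3.le]
  · rw [min_eq_right h]
    have h1 : (2:ℝ) ≤ Real.exp 1 := by have := Real.add_one_le_exp 1; linarith
    have h2 : Real.exp (-s) ≤ Real.exp (-1) := Real.exp_le_exp.mpr (by linarith)
    have h4 : Real.exp (-1) * Real.exp 1 = 1 := by rw [← Real.exp_add]; norm_num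
    have h5 : (0:ℝ) < Real.exp (-1) := Real.exp_pos _
    nlinarith

lemma uav_phi_le {lam r : ℝ} (hlam : 0 < lam) (hr : 1 ≤ r) (u x : ℝ) :
    uavPhi lam r u x ≤ 1 + (2 * r * lam ^ (-(1/(2*r)) : ℝ)) * |x - u| ^ (-(1/2) : ℝ) := by
  have hr0 : (0:ℝ) < r := lt_of_lt_of_le one_pos hr
  have hCpos : (0:ℝ) < 2 * r * lam ^ (-(1/(2*r)) : ℝ) := by positivity
  by_cases hx : x = u
  · have h0 : uavPhi lam r u x = 0 := by
      unfold uavPhi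
      rw [hx, sub_self, abs_zero, Real.zero_rpow hr0.ne', mul_zero, Real.exp_zero, sub_self,
        Real.log_zero, neg_zero]
    rw [h0, hx, sub_self, abs_zero, Real.zero_rpow (by norm_num : (-(1/2) : ℝ) ≠ 0), mul_zero]
    norm_num
  · have ht : 0 < |x - u| := abs_pos.mpr (sub_ne_zero.mpr hx)
    set t : ℝ := |x - u| with htdef
    set s : ℝ := lam * t ^ r with hsdef
    have hs : 0 < s := mul_pos hlam (Real.rpow_pos_of_pos ht r)
    have hmin : 0 < min s 1 := lt_min hs one_pos
    have hA : Real.exp (-1) * min s 1 ≤ 1 - Real.exp (-s) := uav_key_exp hs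
    have hB : uavPhi lam r u x ≤ 1 - Real.log (min s 1) := by
      unfold uavPhi
      have hlog : Real.log (Real.exp (-1) * min s 1) ≤ Real.log (1 - Real.exp (-s)) :=
        Real.log_le_log (by positivity) hA
      rw [Real.log_mul (Real.exp_ne_zero _) hmin.ne', Real.log_exp] at hlog
      rw [show -lam * |x - u| ^ r = -s by rw [hsdef, htdef]; ring]
      linarith
    have hC : -Real.log (min s 1) ≤ 2 * r * s ^ (-(1/(2*r)) : ℝ) := by
      rcases le_total 1 s with h | h
      · rw [min_eq_right h, Real.log_one, neg_zero]
        positivity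
      · rw [min_eq_left h]
        have hw : (0:ℝ) < s ^ ((1/(2*r)) : ℝ) := Real.rpow_pos_of_pos hs _
        have hle : Real.log ((s ^ ((1/(2*r)) : ℝ))⁻¹) ≤ (s ^ ((1/(2*r)) : ℝ))⁻¹ - 1 :=
          Real.log_le_sub_one_of_pos (by positivity)
        rw [Real.log_inv, Real.log_rpow hs] at hle
        have h2r : (0:ℝ) < 2 * r := by linarith
        have hmul := mul_le_mul_of_nonneg_left hle h2r.le
        have hsimp : 2 * r * -(1/(2*r) * Real.log s) = -Real.log s := by
          field_simp
        rw [hsimp] at hmul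
        rw [Real.rpow_neg hs.le]
        nlinarith
    have hD : s ^ (-(1/(2*r)) : ℝ) = lam ^ (-(1/(2*r)) : ℝ) * t ^ (-(1/2) : ℝ) := by
      have hexp : r * (-(1/(2*r)) : ℝ) = -(1/2) := by
        field_simp
      rw [hsdef, Real.mul_rpow hlam.le (Real.rpow_nonneg ht.le r), ← Real.rpow_mul ht.le, hexp]
    have := hB.trans (by nlinarith [hC, hD] : 1 - Real.log (min s 1) ≤
      1 + (2 * r * lam ^ (-(1/(2*r)) : ℝ)) * t ^ (-(1/2) : ℝ))
    simpa [htdef] using this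

lemma uav_integral_bound (M lam r : ℝ) (hM : 0 < M) (hlam : 0 < lam) (hr : 1 ≤ r) :
    ∃ K : ℝ, 0 < K ∧ ∀ u : ℝ,
      IntegrableOn (uavPhi lam r u) (Set.Icc 0 M) volume ∧
      ∫ x in Set.Icc (0:ℝ) M, uavPhi lam r u x ≤ K := by
  have hr0 : (0:ℝ) < r := lt_of_lt_of_le one_pos hr
  set q : ℝ := -(1/2) with hq
  set C : ℝ := 2 * r * lam ^ (-(1/(2*r)) : ℝ) with hC
  have hCpos : 0 < C := by rw [hC]; positivity
  set K2 : ℝ := ∫ y in Set.Icc (-(4*M)) (4*M), |y| ^ q with hK2def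
  set K3 : ℝ := M * (2*M) ^ q with hK3def
  have hK2 : 0 ≤ K2 := setIntegral_nonneg measurableSet_Icc
    (fun x _ => Real.rpow_nonneg (abs_nonneg x) q)
  have hK3 : 0 ≤ K3 := by rw [hK3def]; positivity
  refine ⟨M + C * (K2 + K3), by positivity, fun u => ?_⟩
  have hconst : IntegrableOn (fun _ : ℝ => (1:ℝ)) (Set.Icc 0 M) volume :=
    (integrableOn_const_iff).mpr (Or.inr (by rw [Real.volume_Icc]; exact ENNReal.ofReal_lt_top))
  have hID : IntegrableOn (fun x => 1 + C * |x - u| ^ q) (Set.Icc 0 M) volume :=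
    hconst.add ((uav_integrableOn u 0 M hM.le).const_mul C)
  have hIphi : IntegrableOn (uavPhi lam r u) (Set.Icc 0 M) volume := by
    apply Integrable.mono' hID (uav_measurable lam r u).aestronglyMeasurable
    apply ae_of_all
    intro x
    rw [Real.norm_eq_abs, abs_of_nonneg (uav_phi_nonneg hlam r u x)]
    exact uav_phi_le hlam hr u x
  refine ⟨hIphi, ?_⟩
  have h1 : ∫ x in Set.Icc (0:ℝ) M, uavPhi lam r u x ≤
      ∫ x in Set.Icc (0:ℝ) M, (1 + C * |x - u| ^ q) :=
    integral_mono hIphi hID (fun x => uav_phi_le hlam hr u x)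
  have h2 : ∫ x in Set.Icc (0:ℝ) M, (1 + C * |x - u| ^ q) =
      M + C * ∫ x in Set.Icc (0:ℝ) M, |x - u| ^ q := by
    rw [integral_add hconst ((uav_integrableOn u 0 M hM.le).const_mul C),
      integral_const_mul, setIntegral_const, measureReal_def, Real.volume_Icc, sub_zero,
      ENNReal.toReal_ofReal hM.le, smul_eq_mul, mul_one]
  have h3 : ∫ x in Set.Icc (0:ℝ) M, |x - u| ^ q ≤ K2 + K3 := by
    by_cases hu : |u| ≤ 3*M
    · have hu' := abs_le.mp hu
      have hsub : Set.Icc (0:ℝ) M ⊆ Set.Icc (u - 4*M) (u + 4*M) := by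
        intro x hx
        obtain ⟨hx0, hxM⟩ := hx
        exact Set.mem_Icc.mpr ⟨by linarith [hu'.1, hu'.2], by linarith [hu'.1, hu'.2]⟩
      have hIbig : IntegrableOn (fun x => |x - u| ^ q) (Set.Icc (u - 4*M) (u + 4*M)) volume :=
        uav_integrableOn u _ _ (by linarith)
      have hmono : ∫ x in Set.Icc (0:ℝ) M, |x - u| ^ q ≤
          ∫ x in Set.Icc (u - 4*M) (u + 4*M), |x - u| ^ q :=
        setIntegral_mono_set hIbig
          (ae_of_all _ fun x => Real.rpow_nonneg (abs_nonneg _) q)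
          (HasSubset.Subset.eventuallyLE hsub)
      have htrans : ∫ x in Set.Icc (u - 4*M) (u + 4*M), |x - u| ^ q = K2 := by
        have e1 : (u - 4*M) - u = -(4*M) := by ring
        have e2 : (u + 4*M) - u = 4*M := by ring
        calc ∫ x in Set.Icc (u - 4*M) (u + 4*M), |x - u| ^ q
            = ∫ x in (u - 4*M)..(u + 4*M), |x - u| ^ q := by
              rw [intervalIntegral.integral_of_le (by linarith), integral_Icc_eq_integral_Ioc]
          _ = ∫ y in (-(4*M))..(4*M), |y| ^ q := by
              rw [intervalIntegral.integral_comp_sub_right (fun y => |y| ^ q) u, e1, e2]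
          _ = K2 := by
              rw [hK2def, intervalIntegral.integral_of_le (by linarith),
                integral_Icc_eq_integral_Ioc]
      linarith [hmono, htrans]
    · push_neg at hu
      have hpt : ∀ x ∈ Set.Icc (0:ℝ) M, |x - u| ^ q ≤ (2*M) ^ q := by
        intro x hx
        obtain ⟨hx0, hxM⟩ := hx
        have habs : |u| - |x| ≤ |x - u| := by
          calc |u| - |x| ≤ |u - x| := abs_sub_abs_le_abs_sub u x
            _ = |x - u| := abs_sub_comm u x
        have hxabs : |x| ≤ M := by rw [abs_of_nonneg hx0]; exact hxM
        have h2M : 2*M ≤ |x - u| := by linarith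
        exact Real.rpow_le_rpow_of_nonpos (by linarith) h2M (by rw [hq]; norm_num)
      have hconst2 : IntegrableOn (fun _ : ℝ => (2*M) ^ q) (Set.Icc 0 M) volume :=
        (integrableOn_const_iff).mpr (Or.inr (by rw [Real.volume_Icc]; exact ENNReal.ofReal_lt_top))
      have := setIntegral_mono_on (uav_integrableOn u 0 M hM.le) hconst2
        measurableSet_Icc hpt
      rw [setIntegral_const, measureReal_def, Real.volume_Icc, sub_zero, ENNReal.toReal_ofReal hM.le,
        smul_eq_mul] at this
      have : ∫ x in Set.Icc (0:ℝ) M, |x - u| ^ q ≤ K3 := by rw [hK3def]; linarith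
      linarith
  have h4 : C * ∫ x in Set.Icc (0:ℝ) M, |x - u| ^ q ≤ C * (K2 + K3) :=
    mul_le_mul_of_nonneg_left h3 hCpos.le
  linarith

/-- For the uniform density on `[0,M]` at altitude `h = 0`, there is a
constant `c > 0` independent of `n` such that every deployment of `n ≥ 1` UAVs has
outage probability at least `cⁿ`. -/
theorem stmt_5 (M lam r : ℝ) (hM : 0 < M) (hlam : 0 < lam) (hr : 1 ≤ r) :
    ∃ c : ℝ, 0 < c ∧
      ∀ n : ℕ, 1 ≤ n → ∀ u : Fin n → ℝ,
        c ^ n ≤ (1 / M) * ∫ x in Set.Icc (0 : ℝ) M,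
          ∏ i, (1 - Real.exp (-lam * |x - u i| ^ r)) := by
  obtain ⟨K, hK, hKall⟩ := uav_integral_bound M lam r hM hlam hr
  refine ⟨Real.exp (-(K/M)), Real.exp_pos _, fun n hn u => ?_⟩
  set μ : Measure ℝ := volume.restrict (Set.Icc (0:ℝ) M) with hμ
  have hμuniv : μ Set.univ = ENNReal.ofReal M := by
    rw [hμ, Measure.restrict_apply_univ, Real.volume_Icc, sub_zero]
  haveI : IsFiniteMeasure μ := ⟨by rw [hμuniv]; exact ENNReal.ofReal_lt_top⟩
  haveI : NeZero μ := by
    refine ⟨fun h => ?_⟩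
    rw [h] at hμuniv
    simp only [Measure.coe_zero, Pi.zero_apply] at hμuniv
    have : M ≤ 0 := ENNReal.ofReal_eq_zero.mp hμuniv.symm
    linarith
  set S : ℝ → ℝ := fun x => ∑ i, uavPhi lam r (u i) x with hS
  have hSint : Integrable S μ := integrable_finset_sum _ (fun i _ => (hKall (u i)).1)
  have hSnn : ∀ x, 0 ≤ S x := fun x =>
    Finset.sum_nonneg fun i _ => uav_phi_nonneg hlam r (u i) x
  have hSmeas : Measurable S :=
    Finset.measurable_sum _ (fun i _ => uav_measurable lam r (u i))
  have hexpint : Integrable (fun x => Real.exp (-S x)) μ := by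
    apply Integrable.mono' (integrable_const (1:ℝ)) (hSmeas.neg.exp).aestronglyMeasurable
    apply ae_of_all
    intro x
    rw [Real.norm_eq_abs, abs_of_nonneg (Real.exp_pos _).le]
    exact Real.exp_le_one_iff.mpr (neg_nonpos.mpr (hSnn x))
  have hjen : Real.exp (⨍ x, (-S x) ∂μ) ≤ ⨍ x, Real.exp (-S x) ∂μ := by
    exact convexOn_exp.map_average_le Real.continuous_exp.continuousOn isClosed_univ
      (ae_of_all _ fun x => Set.mem_univ _) hSint.neg hexpint
  have hMtoReal : (μ Set.univ).toReal = M := by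
    rw [hμuniv, ENNReal.toReal_ofReal hM.le]
  have hintS : ∫ x, S x ∂μ ≤ n * K := by
    rw [hS]
    rw [integral_finset_sum _ (fun i _ => (hKall (u i)).1)]
    calc ∑ i : Fin n, ∫ x, uavPhi lam r (u i) x ∂μ ≤ ∑ _i : Fin n, K :=
          Finset.sum_le_sum fun i _ => (hKall (u i)).2
      _ = n * K := by rw [Finset.sum_const, Finset.card_univ, Fintype.card_fin, nsmul_eq_mul]
  have havg : ⨍ x, (-S x) ∂μ = -(M⁻¹ * ∫ x, S x ∂μ) := by
    rw [average_neg, average_eq, measureReal_def, hMtoReal, smul_eq_mul]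
  have hle1 : -((n * K) / M) ≤ ⨍ x, (-S x) ∂μ := by
    rw [havg]
    have hMinv : (0:ℝ) ≤ M⁻¹ := by positivity
    have := mul_le_mul_of_nonneg_left hintS hMinv
    have heq : M⁻¹ * (↑n * K) = (↑n * K) / M := by ring
    linarith [heq ▸ this]
  have hchain : Real.exp (-(K/M)) ^ n ≤ ⨍ x, Real.exp (-S x) ∂μ := by
    calc Real.exp (-(K/M)) ^ n = Real.exp (n * (-(K/M))) := (Real.exp_nat_mul _ n).symm
      _ = Real.exp (-((n * K) / M)) := by congr 1; ring
      _ ≤ Real.exp (⨍ x, (-S x) ∂μ) := Real.exp_le_exp.mpr hle1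
      _ ≤ ⨍ x, Real.exp (-S x) ∂μ := hjen
  have hcongr : ∫ x, Real.exp (-S x) ∂μ =
      ∫ x in Set.Icc (0:ℝ) M, ∏ i, (1 - Real.exp (-lam * |x - u i| ^ r)) := by
    apply integral_congr_ae
    have hv : volume (⋃ i : Fin n, ({u i} : Set ℝ)) = 0 :=
      measure_iUnion_null fun i => measure_singleton _
    have hN : μ (⋃ i : Fin n, ({u i} : Set ℝ)) = 0 := by
      refine le_antisymm ?_ zero_le
      calc μ (⋃ i : Fin n, ({u i} : Set ℝ)) ≤ volume (⋃ i : Fin n, ({u i} : Set ℝ)) :=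
            Measure.restrict_le_self _
        _ = 0 := hv
    have hae : ∀ᵐ x ∂μ, x ∉ ⋃ i : Fin n, ({u i} : Set ℝ) := measure_eq_zero_iff_ae_notMem.mp hN
    filter_upwards [hae] with x hx
    have hxne : ∀ i, x ≠ u i := fun i h => hx (Set.mem_iUnion.mpr ⟨i, by rw [h]; rfl⟩)
    calc Real.exp (-S x) = Real.exp (∑ i, -(uavPhi lam r (u i) x)) := by
          rw [hS]; congr 1; rw [Finset.sum_neg_distrib]
      _ = ∏ i, Real.exp (-(uavPhi lam r (u i) x)) := Real.exp_sum _ _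
      _ = ∏ i, (1 - Real.exp (-lam * |x - u i| ^ r)) :=
          Finset.prod_congr rfl fun i _ => (uav_factor_eq hlam (hxne i)).symm
  calc Real.exp (-(K/M)) ^ n ≤ ⨍ x, Real.exp (-S x) ∂μ := hchain
    _ = (1 / M) * ∫ x in Set.Icc (0:ℝ) M, ∏ i, (1 - Real.exp (-lam * |x - u i| ^ r)) := by
        rw [average_eq, measureReal_def, hMtoReal, smul_eq_mul, hcongr, one_div]
end

section
/- Let λ > 0 and r > 1. The function g(x) = 1 - exp(-λ x^r / 3^r) is convex on the interval [0, 3 λ^{-1/r} (1 - 1/r)^{1/r}], and consequently x ↦ x·(1 - exp(-λ x^r/3^r))ⁿ is convex on the same interval for every n ≥ 1. -/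
open Real

/-- `g(x) = 1 - exp(-λx^r/3^r)` is convex on
`[0, 3λ^{-1/r}(1-1/r)^{1/r}]`, and so is `x ↦ x·g(x)ⁿ` for every `n ≥ 1`. -/
theorem stmt_7 (lam r : ℝ) (hlam : 0 < lam) (hr : 1 < r) :
    ConvexOn ℝ (Set.Icc 0 (3 * lam ^ (-(1 / r)) * (1 - 1 / r) ^ (1 / r)))
      (fun x : ℝ => 1 - Real.exp (-lam * x ^ r / 3 ^ r)) ∧
    ∀ n : ℕ, 1 ≤ n →
      ConvexOn ℝ (Set.Icc 0 (3 * lam ^ (-(1 / r)) * (1 - 1 / r) ^ (1 / r)))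
        (fun x : ℝ => x * (1 - Real.exp (-lam * x ^ r / 3 ^ r)) ^ n) := by
  have hr0 : (0:ℝ) < r := lt_trans one_pos hr
  have hrne : r ≠ 0 := ne_of_gt hr0
  have hs : (0:ℝ) < 1 - 1 / r := by
    have : 1 / r < 1 := by rw [div_lt_one hr0]; exact hr
    linarith
  set c : ℝ := 3 * lam ^ (-(1 / r)) * (1 - 1 / r) ^ (1 / r) with hc
  have hcpos : 0 < c := by
    apply mul_pos (mul_pos (by norm_num) (rpow_pos_of_pos hlam _)) (rpow_pos_of_pos hs _)
  have h3r : (0:ℝ) < 3 ^ r := rpow_pos_of_pos (by norm_num) r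
  -- c ^ r = 3 ^ r * lam⁻¹ * (1 - 1/r)
  have hcr : c ^ r = 3 ^ r * lam⁻¹ * (1 - 1 / r) := by
    rw [hc, mul_rpow (by positivity) (by positivity), mul_rpow (by norm_num) (by positivity),
      ← Real.rpow_mul hlam.le, ← Real.rpow_mul hs.le]
    rw [show -(1/r) * r = -1 by field_simp, show 1/r * r = 1 by field_simp]
    simp [Real.rpow_neg_one]
  set g : ℝ → ℝ := fun x : ℝ => 1 - Real.exp (-lam * x ^ r / 3 ^ r) with hg
  set g' : ℝ → ℝ := fun x : ℝ =>
    lam * r / 3 ^ r * (x ^ (r - 1) * Real.exp (-lam * x ^ r / 3 ^ r)) with hg'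
  have hd : ∀ x : ℝ, HasDerivAt g (g' x) x := by
    intro x
    have h1 : HasDerivAt (fun x : ℝ => x ^ r) (r * x ^ (r - 1)) x :=
      Real.hasDerivAt_rpow_const (Or.inr hr.le)
    have h2 : HasDerivAt (fun x : ℝ => -lam * x ^ r / 3 ^ r)
        (-lam * (r * x ^ (r - 1)) / 3 ^ r) x := by
      exact ((h1.const_mul (-lam)).div_const _)
    have h3 := (h2.exp).const_sub 1
    convert h3 using 1
    · rfl
    · rfl
    rw [hg']; ring
  -- second derivative of g
  set g'' : ℝ → ℝ := fun x : ℝ =>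
    lam * r / 3 ^ r * Real.exp (-lam * x ^ r / 3 ^ r) * x ^ (r - 1 - 1) *
      ((r - 1) - lam * r * x ^ r / 3 ^ r) with hg''
  have hd2 : ∀ x : ℝ, 0 < x → HasDerivAt g' (g'' x) x := by
    intro x hx
    have h1 : HasDerivAt (fun x : ℝ => x ^ (r - 1)) ((r - 1) * x ^ (r - 1 - 1)) x :=
      Real.hasDerivAt_rpow_const (Or.inl hx.ne')
    have hu : HasDerivAt (fun x : ℝ => -lam * x ^ r / 3 ^ r)
        (-lam * (r * x ^ (r - 1)) / 3 ^ r) x :=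
      ((Real.hasDerivAt_rpow_const (Or.inr hr.le)).const_mul (-lam)).div_const _
    have h2 := (h1.mul hu.exp).const_mul (lam * r / 3 ^ r)
    convert h2 using 1
    · rfl
    · rfl
    · rfl
    rw [hg'']
    have e1 : x ^ (r - 1) * x ^ (r - 1) = x ^ (r - 1 - 1) * x ^ r := by
      rw [← Real.rpow_add hx, ← Real.rpow_add hx]; ring_nf
    linear_combination ((lam * r / 3 ^ r) ^ 2 * Real.exp (-lam * x ^ r / 3 ^ r)) * e1
  have hint : interior (Set.Icc (0:ℝ) c) = Set.Ioo 0 c := interior_Icc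
  -- bound giving nonnegativity of g''
  have hbound : ∀ x ∈ Set.Ioo (0:ℝ) c, 0 ≤ g'' x := by
    intro x hx
    have hxr : x ^ r ≤ c ^ r := Real.rpow_le_rpow hx.1.le hx.2.le hr0.le
    have key : lam * r * x ^ r / 3 ^ r ≤ r - 1 := by
      have heq2 : lam * r * c ^ r / 3 ^ r = r - 1 := by
        rw [hcr]; field_simp
      rw [← heq2]
      exact (div_le_div_iff_of_pos_right h3r).2 (mul_le_mul_of_nonneg_left hxr (by positivity))
    have h1 : (0:ℝ) ≤ lam * r / 3 ^ r := by positivity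
    have h2 : (0:ℝ) < Real.exp (-lam * x ^ r / 3 ^ r) := Real.exp_pos _
    have h3 : (0:ℝ) ≤ x ^ (r - 1 - 1) := (Real.rpow_pos_of_pos hx.1 _).le
    rw [hg'']
    have h4 : (0:ℝ) ≤ r - 1 - lam * r * x ^ r / 3 ^ r := by linarith
    positivity
  have hgcont : Continuous g := by
    rw [hg]; exact continuous_iff_continuousAt.2 fun x => ((hd x).continuousAt)
  have hconv : ConvexOn ℝ (Set.Icc 0 c) g := by
    apply convexOn_of_hasDerivWithinAt2_nonneg (convex_Icc 0 c) hgcont.continuousOn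
      (f' := g') (f'' := g'')
    · intro x hx; exact (hd x).hasDerivWithinAt
    · intro x hx; rw [hint] at hx; exact (hd2 x hx.1).hasDerivWithinAt
    · intro x hx; rw [hint] at hx; exact hbound x hx
  have hmono : MonotoneOn g (Set.Icc 0 c) := by
    apply monotoneOn_of_deriv_nonneg (convex_Icc 0 c) hgcont.continuousOn
      (fun x _ => ((hd x).differentiableAt).differentiableWithinAt)
    intro x hx
    rw [hint] at hx
    rw [(hd x).deriv, hg']
    have := (Real.rpow_pos_of_pos hx.1 (r - 1)).le
    positivity
  have hgnn : ∀ x ∈ Set.Icc (0:ℝ) c, 0 ≤ g x := by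
    intro x hx
    rw [hg]
    simp only [sub_nonneg]
    rw [← Real.exp_zero]
    apply Real.exp_le_exp.2
    have hxr : (0:ℝ) ≤ x ^ r := Real.rpow_nonneg hx.1 r
    rw [neg_mul, neg_div, neg_nonpos]
    positivity
  refine ⟨hconv, fun n _ => ?_⟩
  have hgn : ConvexOn ℝ (Set.Icc 0 c) (g ^ n) := hconv.pow hgnn n
  have hgnmono : MonotoneOn (g ^ n) (Set.Icc 0 c) := fun x hx y hy hxy =>
    pow_le_pow_left₀ (hgnn x hx) (hmono hx hy hxy) n
  have hgnnn : ∀ x ∈ Set.Icc (0:ℝ) c, 0 ≤ (g ^ n) x := fun x hx =>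
    pow_nonneg (hgnn x hx) n
  have hid : ConvexOn ℝ (Set.Icc (0:ℝ) c) id := convexOn_id (convex_Icc 0 c)
  have hidmono : MonotoneOn (id : ℝ → ℝ) (Set.Icc 0 c) := fun x _ y _ hxy => hxy
  have := hid.mul hgn (fun x hx => hx.1) hgnnn (hidmono.monovaryOn hgnmono)
  have heq : (id * g ^ n) = fun x : ℝ => x * g x ^ n := by
    funext x; simp
  rw [heq] at this
  exact this
end

section
/- Let λ > 0, r > 0, h ≥ 0, and g(x,u) = exp(-λ(‖x-u‖²+h²)^(r/2)). For any probability density f on ℝ^d, any n ≥ 1, and any deployment (u₁,…,uₙ), the outage probability satisfies |P_O(U) - (1 - Σᵢ ∫ g(x,uᵢ) f(x) dx)| ≤ 2ⁿ e^{-2λ h^r}, where P_O(U) = ∫ ∏ᵢ(1 - g(x,uᵢ)) f(x) dx. -/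
open Real MeasureTheory

lemma stmt8_aux {n : ℕ} (s : Finset (Fin n)) (t : Fin n → ℝ) (ε : ℝ) (hε : ε ≤ 1)
    (ht0 : ∀ i, 0 ≤ t i) (htε : ∀ i, t i ≤ ε) :
    |(∏ i ∈ s, (1 - t i)) - (1 - ∑ i ∈ s, t i)| ≤ 2 ^ s.card * ε ^ 2 := by
  classical
  induction s using Finset.induction_on with
  | empty => simp [sq_nonneg]
  | @insert a s ha ih =>
    rw [Finset.prod_insert ha, Finset.sum_insert ha, Finset.card_insert_of_notMem ha]
    have hε0 : 0 ≤ ε := le_trans (ht0 a) (htε a)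
    have hS0 : 0 ≤ ∑ i ∈ s, t i := Finset.sum_nonneg fun i _ => ht0 i
    have hSε : ∑ i ∈ s, t i ≤ s.card * ε := by
      calc ∑ i ∈ s, t i ≤ ∑ _i ∈ s, ε := Finset.sum_le_sum fun i _ => htε i
        _ = s.card * ε := by rw [Finset.sum_const, nsmul_eq_mul]
    have key : (1 - t a) * ∏ i ∈ s, (1 - t i) - (1 - (t a + ∑ i ∈ s, t i))
        = (1 - t a) * ((∏ i ∈ s, (1 - t i)) - (1 - ∑ i ∈ s, t i)) + t a * ∑ i ∈ s, t i := by
      ring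
    rw [key]
    have h1 : |1 - t a| ≤ 1 := abs_le.2 ⟨by linarith [htε a], by linarith [ht0 a]⟩
    have h2 : |t a * ∑ i ∈ s, t i| ≤ s.card * ε ^ 2 := by
      rw [abs_of_nonneg (mul_nonneg (ht0 a) hS0)]
      calc t a * ∑ i ∈ s, t i ≤ ε * (s.card * ε) :=
            mul_le_mul (htε a) hSε hS0 hε0
        _ = s.card * ε ^ 2 := by ring
    have hε2 : (0:ℝ) ≤ ε ^ 2 := sq_nonneg ε
    have hcard : (s.card : ℝ) * ε ^ 2 ≤ 2 ^ s.card * ε ^ 2 := by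
      apply mul_le_mul_of_nonneg_right _ hε2
      exact_mod_cast Nat.le_of_lt (Nat.lt_two_pow_self (n := s.card))
    have hA : |(1 - t a) * ((∏ i ∈ s, (1 - t i)) - (1 - ∑ i ∈ s, t i))| ≤ 2 ^ s.card * ε ^ 2 := by
      rw [abs_mul]
      calc |1 - t a| * |(∏ i ∈ s, (1 - t i)) - (1 - ∑ i ∈ s, t i)|
          ≤ 1 * (2 ^ s.card * ε ^ 2) := mul_le_mul h1 ih (abs_nonneg _) zero_le_one
        _ = 2 ^ s.card * ε ^ 2 := one_mul _
    calc |(1 - t a) * ((∏ i ∈ s, (1 - t i)) - (1 - ∑ i ∈ s, t i)) + t a * ∑ i ∈ s, t i|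
        ≤ |(1 - t a) * ((∏ i ∈ s, (1 - t i)) - (1 - ∑ i ∈ s, t i))| + |t a * ∑ i ∈ s, t i| :=
          abs_add_le _ _
      _ ≤ 2 ^ s.card * ε ^ 2 + 2 ^ s.card * ε ^ 2 := by linarith
      _ = 2 ^ (s.card + 1) * ε ^ 2 := by rw [pow_succ]; ring

/-- The outage probability differs from its first-order expansion
`1 - Σᵢ ∫ g(x,uᵢ) f(x) dx` by at most `2ⁿ e^{-2λh^r}`. -/
theorem stmt_8 (d n : ℕ) (hn : 1 ≤ n) (lam h r : ℝ) (hlam : 0 < lam) (hh : 0 ≤ h) (hr : 0 < r)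
    (f : EuclideanSpace ℝ (Fin d) → ℝ) (hfm : Measurable f)
    (hf0 : ∀ x, 0 ≤ f x) (hf1 : ∫ x, f x = 1)
    (u : Fin n → EuclideanSpace ℝ (Fin d)) :
    |(∫ x, (∏ i, (1 - Real.exp (-lam * ((‖x - u i‖ ^ 2 + h ^ 2) ^ (r / 2))))) * f x)
      - (1 - ∑ i, ∫ x, Real.exp (-lam * ((‖x - u i‖ ^ 2 + h ^ 2) ^ (r / 2))) * f x)|
      ≤ 2 ^ n * Real.exp (-2 * lam * h ^ r) := by
  classical
  set G : Fin n → EuclideanSpace ℝ (Fin d) → ℝ :=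
    fun i x => Real.exp (-lam * ((‖x - u i‖ ^ 2 + h ^ 2) ^ (r / 2))) with hG
  set ε : ℝ := Real.exp (-lam * h ^ r) with hεdef
  have hr2 : (0:ℝ) ≤ r / 2 := by linarith
  have hhr : (0:ℝ) ≤ h ^ r := Real.rpow_nonneg hh r
  have hε1 : ε ≤ 1 := Real.exp_le_one_iff.2 (by nlinarith)
  have hε0 : 0 ≤ ε := (Real.exp_pos _).le
  have hεsq : ε ^ 2 = Real.exp (-2 * lam * h ^ r) := by
    rw [sq, ← Real.exp_add]; ring_nf
  have hG0 : ∀ i x, 0 ≤ G i x := fun i x => (Real.exp_pos _).le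
  have hGε : ∀ i x, G i x ≤ ε := by
    intro i x
    apply Real.exp_le_exp.2
    have h1 : h ^ r = (h ^ 2) ^ (r / 2) := by
      rw [← Real.rpow_natCast h 2, ← Real.rpow_mul hh]
      congr 1
      push_cast; ring
    rw [h1]
    have : (h ^ 2 : ℝ) ^ (r / 2) ≤ (‖x - u i‖ ^ 2 + h ^ 2) ^ (r / 2) := by
      apply Real.rpow_le_rpow (by positivity) (by nlinarith [sq_nonneg ‖x - u i‖]) hr2
    nlinarith
  have hG1 : ∀ i x, G i x ≤ 1 := fun i x => le_trans (hGε i x) hε1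
  have hGc : ∀ i, Continuous (G i) := by
    intro i
    apply Real.continuous_exp.comp
    apply Continuous.mul continuous_const
    apply Continuous.rpow_const
    · continuity
    · intro x; right; exact hr2
  have hfInt : Integrable f := by
    by_contra hc
    rw [integral_undef hc] at hf1
    norm_num at hf1
  have hGfInt : ∀ i, Integrable (fun x => G i x * f x) := by
    intro i
    apply hfInt.mono ((hGc i).measurable.mul hfm).aestronglyMeasurable
    filter_upwards with x
    have e1 : ‖G i x * f x‖ = G i x * f x := by
      rw [Real.norm_eq_abs, abs_of_nonneg (mul_nonneg (hG0 i x) (hf0 x))]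
    have e2 : ‖f x‖ = f x := by rw [Real.norm_eq_abs, abs_of_nonneg (hf0 x)]
    simp only [Pi.mul_apply]; rw [e1, e2]
    calc G i x * f x ≤ 1 * f x := mul_le_mul_of_nonneg_right (hG1 i x) (hf0 x)
      _ = f x := one_mul _
  have hProdInt : Integrable (fun x => (∏ i, (1 - G i x)) * f x) := by
    have hPc : Continuous fun x => ∏ i, (1 - G i x) :=
      continuous_finset_prod _ fun i _ => continuous_const.sub (hGc i)
    apply hfInt.mono (hPc.measurable.mul hfm).aestronglyMeasurable
    filter_upwards with x
    have h01 : 0 ≤ ∏ i, (1 - G i x) :=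
      Finset.prod_nonneg fun i _ => by linarith [hG1 i x]
    have h11 : ∏ i, (1 - G i x) ≤ 1 :=
      Finset.prod_le_one (fun i _ => by linarith [hG1 i x]) (fun i _ => by linarith [hG0 i x])
    have e1 : ‖(∏ i, (1 - G i x)) * f x‖ = (∏ i, (1 - G i x)) * f x := by
      rw [Real.norm_eq_abs, abs_of_nonneg (mul_nonneg h01 (hf0 x))]
    have e2 : ‖f x‖ = f x := by rw [Real.norm_eq_abs, abs_of_nonneg (hf0 x)]
    simp only [Pi.mul_apply]; rw [e1, e2]
    calc (∏ i, (1 - G i x)) * f x ≤ 1 * f x := mul_le_mul_of_nonneg_right h11 (hf0 x)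
      _ = f x := one_mul _
  have hSumInt : Integrable (fun x => (∑ i, G i x) * f x) := by
    have h0 := integrable_finset_sum (μ := (volume : Measure (EuclideanSpace ℝ (Fin d))))
      Finset.univ (fun i (_ : i ∈ Finset.univ) => hGfInt i)
    apply h0.congr
    filter_upwards with x
    rw [Finset.sum_mul]
  have hInt2 : Integrable (fun x => (1 - ∑ i, G i x) * f x) := by
    apply (hfInt.sub hSumInt).congr
    filter_upwards with x
    simp only [Pi.sub_apply]
    ring
  have hsum : (1 - ∑ i, ∫ x, G i x * f x) = ∫ x, (1 - ∑ i, G i x) * f x := by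
    have e1 : ∑ i, ∫ x, G i x * f x = ∫ x, (∑ i, G i x) * f x := by
      rw [← integral_finset_sum Finset.univ (fun i _ => hGfInt i)]
      congr 1; funext x; rw [Finset.sum_mul]
    have e2 : ∫ x, (1 - ∑ i, G i x) * f x
        = (∫ x, f x) - ∫ x, (∑ i, G i x) * f x := by
      rw [← integral_sub hfInt hSumInt]
      congr 1; funext x; ring
    rw [e2, hf1, e1]
  rw [hsum, ← integral_sub hProdInt hInt2]
  have hptwise : ∀ x, |(∏ i, (1 - G i x)) * f x - (1 - ∑ i, G i x) * f x|
      ≤ (2 ^ n * ε ^ 2) * f x := by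
    intro x
    have hb := stmt8_aux Finset.univ (fun i => G i x) ε hε1 (fun i => hG0 i x) (fun i => hGε i x)
    rw [Finset.card_univ, Fintype.card_fin] at hb
    calc |(∏ i, (1 - G i x)) * f x - (1 - ∑ i, G i x) * f x|
        = |(∏ i, (1 - G i x)) - (1 - ∑ i, G i x)| * f x := by
          rw [← sub_mul, abs_mul, abs_of_nonneg (hf0 x)]
      _ ≤ (2 ^ n * ε ^ 2) * f x := mul_le_mul_of_nonneg_right hb (hf0 x)
  calc |∫ x, ((∏ i, (1 - G i x)) * f x - (1 - ∑ i, G i x) * f x)|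
      ≤ ∫ x, |(∏ i, (1 - G i x)) * f x - (1 - ∑ i, G i x) * f x| :=
        by simpa [Real.norm_eq_abs] using
          norm_integral_le_integral_norm
            (fun x => (∏ i, (1 - G i x)) * f x - (1 - ∑ i, G i x) * f x)
    _ ≤ ∫ x, (2 ^ n * ε ^ 2) * f x := by
        apply integral_mono_of_nonneg
        · filter_upwards with x; exact abs_nonneg _
        · exact hfInt.const_mul _
        · filter_upwards with x; exact hptwise x
    _ = 2 ^ n * ε ^ 2 := by rw [integral_const_mul, hf1, mul_one]
    _ = 2 ^ n * Real.exp (-2 * lam * h ^ r) := by rw [hεsq]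
end

section
/- Let w : ℝ^d × ℝ^d → [0,1] depend only on the distance: w(x,u) = W(‖x-u‖) for some function W. Let f be a probability density on ℝ that is unimodal with center μ, and assume W is non-increasing and nonnegative. Then u = μ maximizes u ↦ ∫ w(x,u) f(x) dx over ℝ. -/
open Real MeasureTheory

/-- If the success probability kernel `w(x,u) = W(|x-u|)` takes values
in `[0,1]` and `W` is nonnegative and non-increasing, then the center `μ` of a
unimodal density `f` maximizes `u ↦ ∫ w(x,u) f(x) dx`. -/
theorem stmt_16 (W : ℝ → ℝ) (hW0 : ∀ s, 0 ≤ W s) (hW1 : ∀ s, W s ≤ 1)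
    (hWanti : AntitoneOn W (Set.Ici 0))
    (f : ℝ → ℝ) (μ : ℝ) (hf0 : ∀ x, 0 ≤ f x) (hf1 : ∫ x, f x = 1)
    (hmono : MonotoneOn f (Set.Iic μ)) (hanti : AntitoneOn f (Set.Ici μ))
    (hsym : ∀ c : ℝ, f (μ + c) = f (μ - c)) :
    ∀ u : ℝ, ∫ x, W |x - u| * f x ≤ ∫ x, W |x - μ| * f x := by
  intro u
  -- a globally antitone modification of W agreeing with W on [0, ∞)
  set W' : ℝ → ℝ := fun s => W (max s 0) with hW'def
  have hW'anti : Antitone W' := fun s t hst =>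
    hWanti (le_max_right s 0) (le_max_right t 0) (max_le_max hst le_rfl)
  have hW'0 : ∀ s, 0 ≤ W' s := fun s => hW0 _
  have hW'1 : ∀ s, W' s ≤ 1 := fun s => hW1 _
  have hWeq : ∀ t : ℝ, W |t| = W' |t| := by
    intro t; simp only [hW'def, max_eq_left (abs_nonneg t)]
  -- f in terms of distance to μ
  have hfabs : ∀ x : ℝ, f x = f (μ + |x - μ|) := by
    intro x
    rcases le_total μ x with h | h
    · rw [abs_of_nonneg (by linarith : (0:ℝ) ≤ x - μ)]
      congr 1; ring
    · rw [abs_of_nonpos (by linarith : x - μ ≤ (0:ℝ)), hsym]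
      congr 1; ring
  -- integrability
  have hfint : Integrable f := by
    by_contra h
    rw [integral_undef h] at hf1
    exact one_ne_zero hf1.symm
  have hWm : Measurable W' := hW'anti.measurable
  have key : ∀ (v : ℝ) (g : ℝ → ℝ), Integrable g → (∀ x, 0 ≤ g x) →
      Integrable (fun x => W' |x - v| * g x) := by
    intro v g hg hg0
    refine hg.mono
      ((hWm.comp ((measurable_id.sub_const v).abs)).aestronglyMeasurable.mul
        hg.aestronglyMeasurable) ?_
    filter_upwards with x
    rw [norm_mul]
    simp only [Real.norm_eq_abs]
    rw [abs_of_nonneg (hW'0 _), abs_of_nonneg (hg0 x)]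
    exact mul_le_of_le_one_left (hg0 x) (hW'1 _)
  have hfshift : Integrable (fun x => f (x + (μ - u))) := hfint.comp_add_right _
  have hP : Integrable (fun x => W' |x - u| * f x) := key u f hfint hf0
  have hQ : Integrable (fun x => W' |x - μ| * f x) := key μ f hfint hf0
  have hP' : Integrable (fun x => W' |x - μ| * f (x + (μ - u))) :=
    key μ _ hfshift (fun x => hf0 _)
  have hQ' : Integrable (fun x => W' |x - u| * f (x + (μ - u))) :=
    key u _ hfshift (fun x => hf0 _)
  -- reflection identity
  have c1 : (∫ x, W' |x - μ| * f (x + (μ - u))) = ∫ x, W' |x - u| * f x := by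
    have hrefl := integral_sub_left_eq_self (fun x => W' |x - u| * f x)
      (volume : Measure ℝ) (u + μ)
    rw [← hrefl]
    congr 1; funext x
    have h1 : |x - μ| = |u + μ - x - u| := by rw [abs_sub_comm]; congr 1; ring
    have h2 : f (x + (μ - u)) = f (u + μ - x) := by
      calc f (x + (μ - u)) = f (μ - (u - x)) := by congr 1; ring
        _ = f (μ + (u - x)) := (hsym _).symm
        _ = f (u + μ - x) := by congr 1; ring
    rw [h1, h2]
  -- translation identity
  have c2 : (∫ x, W' |x - u| * f (x + (μ - u))) = ∫ x, W' |x - μ| * f x := by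
    have htr := integral_add_right_eq_self (μ := (volume : Measure ℝ)) (fun x => W' |x - μ| * f x) (μ - u)
    rw [← htr]
    congr 1; funext x
    have h1 : x + (μ - u) - μ = x - u := by ring
    rw [h1]
  -- pointwise rearrangement inequality
  have point : ∀ x, W' |x - u| * f x + W' |x - μ| * f (x + (μ - u))
      ≤ W' |x - μ| * f x + W' |x - u| * f (x + (μ - u)) := by
    intro x
    set a := |x - μ| with ha
    set b := |x - u| with hb
    have hfa : f x = f (μ + a) := hfabs x
    have hfb : f (x + (μ - u)) = f (μ + b) := by
      rw [hfabs (x + (μ - u))]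
      congr 2
      rw [hb]; congr 1; ring
    rw [hfa, hfb]
    have hprod : 0 ≤ (W' a - W' b) * (f (μ + a) - f (μ + b)) := by
      rcases le_total a b with h | h
      · have h1 : W' b ≤ W' a := hW'anti h
        have h2 : f (μ + b) ≤ f (μ + a) :=
          hanti (Set.mem_Ici.mpr (le_add_of_nonneg_right (abs_nonneg (x - μ))))
            (Set.mem_Ici.mpr (le_add_of_nonneg_right (abs_nonneg (x - u)))) (by linarith)
        have := mul_nonneg (sub_nonneg.mpr h1) (sub_nonneg.mpr h2)
        linarith
      · have h1 : W' a ≤ W' b := hW'anti h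
        have h2 : f (μ + a) ≤ f (μ + b) :=
          hanti (Set.mem_Ici.mpr (le_add_of_nonneg_right (abs_nonneg (x - u))))
            (Set.mem_Ici.mpr (le_add_of_nonneg_right (abs_nonneg (x - μ)))) (by linarith)
        nlinarith [sub_nonpos.mpr h1, sub_nonpos.mpr h2]
    nlinarith [hprod]
  have sum_le : (∫ x, (W' |x - u| * f x + W' |x - μ| * f (x + (μ - u))))
      ≤ ∫ x, (W' |x - μ| * f x + W' |x - u| * f (x + (μ - u))) :=
    integral_mono (hP.add hP') (hQ.add hQ') point
  rw [integral_add hP hP', integral_add hQ hQ', c1, c2] at sum_le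
  simp_rw [hWeq]
  linarith
end
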